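/- Deleting a single element from a partial permutation induces at most a single deletion in its inversion vector: if σ' is obtained from a sequence σ of k distinct values by deleting the entry at position j, then the inversion vector of σ' (a binary vector of length k-2) can be obtained from the inversion vector of σ (a binary vector of length k-1) by deleting a single coordinate. -/
import Mathlib


/-- The inversion vector of a sequence of distinct values:
`inv(σ)_i = 1` iff `σ_i > σ_{i+1}`. -/
def invVec (l : List ℕ) : List Bool :=
  List.zipWith (fun a b => decide (a > b)) l l.tail

lemma invVec_cons_cons (a b : ℕ) (t : List ℕ) :
    invVec (a :: b :: t) = decide (a > b) :: invVec (b :: t) := rfl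

lemma invVec_length (l : List ℕ) : (invVec l).length = l.length - 1 := by
  rcases l with _ | ⟨a, t⟩
  · simp [invVec]
  · simp [invVec]

lemma invVec_append (l : List ℕ) (x : ℕ) (m : List ℕ) :
    invVec (l ++ x :: m) = invVec (l ++ [x]) ++ invVec (x :: m) := by
  induction l with
  | nil => simp [invVec]
  | cons a l ih =>
    cases l with
    | nil => simp [invVec_cons_cons, ih, invVec]
    | cons c l' =>
      simp only [List.cons_append, invVec_cons_cons] at ih ⊢
      rw [ih]

/-- Deleting a single entry from a sequence of `k` distinct values induces a single
deletion in its inversion vector: the inversion vector of the shortened sequence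
is obtained from the original inversion vector by deleting one coordinate. -/
theorem inversion_vector_single_deletion (k j : ℕ) (σ : List ℕ)
    (hlen : σ.length = k) (hk : 2 ≤ k) (hnd : σ.Nodup) (hj : j < k) :
    ∃ i, i < k - 1 ∧ invVec (σ.eraseIdx j) = (invVec σ).eraseIdx i := by
  rcases j with _ | j
  · -- j = 0 : delete the first coordinate of the inversion vector
    rcases σ with _ | ⟨x, _ | ⟨y, t⟩⟩
    · simp at hlen; omega
    · simp at hlen; omega
    · exact ⟨0, by omega, by simp [invVec_cons_cons]⟩
  · -- j ≥ 1
    have hjlt : j < σ.length := by omega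
    have hjlt' : j + 1 < σ.length := by omega
    obtain ⟨a, x, y, b, hσ, halen⟩ :
        ∃ a x y b, σ = a ++ x :: y :: b ∧ a.length = j := by
      refine ⟨σ.take j, σ[j]'hjlt, σ[j+1]'hjlt', σ.drop (j+2), ?_, by simp; omega⟩
      conv_lhs => rw [← List.take_append_drop j σ]
      congr 1
      rw [List.drop_eq_getElem_cons hjlt, List.drop_eq_getElem_cons hjlt']
    subst hσ
    have hklen : k = j + 2 + b.length := by simp [halen] at hlen; omega
    have herase : (a ++ x :: y :: b).eraseIdx (j + 1) = a ++ x :: b := by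
      rw [List.eraseIdx_append_of_length_le (by omega), halen]
      simp
    have hPlen : (invVec (a ++ [x])).length = j := by
      rw [invVec_length]; simp [halen]
    have hvσ : invVec (a ++ x :: y :: b) =
        invVec (a ++ [x]) ++ decide (x > y) :: invVec (y :: b) := by
      rw [invVec_append, invVec_cons_cons]
    cases b with
    | nil =>
      -- y is the last element; delete the last coordinate
      refine ⟨j, by omega, ?_⟩
      rw [herase, invVec_append, hvσ,
        List.eraseIdx_append_of_length_le (k := j) (by omega)]
      simp [hPlen, invVec, halen]
    | cons z b' =>
      simp only [List.length_cons] at hklen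
      have hvσ' : invVec (a ++ x :: y :: z :: b') = invVec (a ++ [x]) ++
          decide (x > y) :: decide (y > z) :: invVec (z :: b') := by
        rw [hvσ, invVec_cons_cons]
      have hP' : invVec ((a ++ x :: y :: z :: b').eraseIdx (j+1)) =
          invVec (a ++ [x]) ++ decide (x > z) :: invVec (z :: b') := by
        rw [herase, invVec_append, invVec_cons_cons]
      have hdisj : decide (x > z) = decide (y > z) ∨ decide (x > z) = decide (x > y) := by
        by_cases h1 : x > y <;> by_cases h2 : y > z <;> by_cases h3 : x > z <;>
          simp [h1, h2, h3] <;> omega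
      rcases hdisj with h | h
      · refine ⟨j, by omega, ?_⟩
        rw [hP', hvσ', List.eraseIdx_append_of_length_le (k := j) (by omega), hPlen]
        simp [h]
      · refine ⟨j + 1, by omega, ?_⟩
        rw [hP', hvσ', List.eraseIdx_append_of_length_le (k := j + 1) (by omega), hPlen]
        simp [h]
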